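/- Let V be a real vector space with a negative definite quadratic form Q (i.e. Q(v) < 0 for every v ≠ 0), and let M be a module over the Clifford algebra of Q that is also an ℝ-vector space with compatible scalar actions (IsScalarTower ℝ (CliffordAlgebra Q) M). If ψ ∈ M is nonzero, f ∈ ℝ, and v ∈ V satisfy ι(v) • ψ = f • ψ, then f = 0 and v = 0. -/
import Mathlib


/-- Rigidity over a negative definite quadratic form: if `M` is a module over the Clifford
algebra of `Q` (compatibly an `ℝ`-vector space), `ψ ≠ 0`, and `ι(v) • ψ = f • ψ`, then
`f = 0` and `v = 0`. -/
theorem eq_zero_of_ι_smul_eq_smul {V : Type*} [AddCommGroup V] [Module ℝ V]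
    (Q : QuadraticForm ℝ V) (hQ : ∀ v : V, v ≠ 0 → Q v < 0)
    {M : Type*} [AddCommGroup M] [Module ℝ M] [Module (CliffordAlgebra Q) M]
    [IsScalarTower ℝ (CliffordAlgebra Q) M]
    (ψ : M) (hψ : ψ ≠ 0) (f : ℝ) (v : V)
    (h : CliffordAlgebra.ι Q v • ψ = f • ψ) : f = 0 ∧ v = 0 := by
  have key : (Q v) • ψ = (f * f) • ψ := by
    have h1 : (CliffordAlgebra.ι Q v * CliffordAlgebra.ι Q v) • ψ = (f * f) • ψ := by
      rw [mul_smul, h]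
      rw [show (f : ℝ) • ψ = (algebraMap ℝ (CliffordAlgebra Q) f) • ψ from
        (algebraMap_smul _ _ _).symm]
      rw [← mul_smul, ← Algebra.commutes, mul_smul, algebraMap_smul, h, ← mul_smul]
    rwa [CliffordAlgebra.ι_sq_scalar, algebraMap_smul] at h1
  have hQf : Q v = f * f := by
    by_contra hne
    exact hψ (by
      have := sub_eq_zero.mpr key
      rw [← sub_smul] at this
      exact (smul_eq_zero.mp this).resolve_left (sub_ne_zero.mpr hne))
  have hv : v = 0 := by
    by_contra hv
    exact absurd hQf (ne_of_lt (lt_of_lt_of_le (hQ v hv) (mul_self_nonneg f)))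
  have hf : f = 0 := by
    have : Q v = 0 := by rw [hv]; simp
    nlinarith [hQf]
  exact ⟨hf, hv⟩
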